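/- Let π be a finite group and L a non-degenerate π-algebra. For α, β ∈ π, a ∈ L_α, and b_β = Σᵢ pᵢ ⊗ qᵢ ∈ L_β ⊗ L_{β⁻¹} the canonical copairing, we have (a ⊗ 1)·b_β = b_{αβ}·(1 ⊗ a) in L ⊗ L, i.e., Σᵢ a·pᵢ^β ⊗ qᵢ^β = Σⱼ pⱼ^{αβ} ⊗ qⱼ^{αβ}·a. Consequently b = Σ_{α∈π} b_α is a separating idempotent, so L is a separable K-algebra. -/

import Mathlib

open scoped TensorProduct

/-- A `G`-algebra (`G`-graded associative unital `K`-algebra with projective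
finite-type components), realized as a grading of an ambient algebra `A` by
submodules. -/
structure GradedPiAlgebra (K : Type*) [CommRing K] (A : Type*) [Ring A] [Algebra K A]
    (G : Type*) [Group G] [DecidableEq G] where
  comp : G → Submodule K A
  one_mem : (1 : A) ∈ comp 1
  mul_mem : ∀ {α β : G} {a b : A}, a ∈ comp α → b ∈ comp β → a * b ∈ comp (α * β)
  internal : DirectSum.IsInternal comp
  projective : ∀ α : G, Module.Projective K (comp α)
  finite : ∀ α : G, Module.Finite K (comp α)


/-- Let `π` be a finite group and `L` a non-degenerate `π`-algebra.
For `α, β ∈ π`, `a ∈ L_α`, and the canonical copairings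
`b_β = Σᵢ pᵢ^β ⊗ qᵢ^β ∈ L_β ⊗ L_{β⁻¹}`, one has `(a ⊗ 1)·b_β = b_{αβ}·(1 ⊗ a)` in
`L ⊗ L`, i.e., `Σᵢ a·pᵢ^β ⊗ qᵢ^β = Σⱼ pⱼ^{αβ} ⊗ qⱼ^{αβ}·a`. Consequently
`b = Σ_{α∈π} b_α` is a separating idempotent: multiplication sends `b` to `1` and
`(a ⊗ 1)·b = b·(1 ⊗ a)` for all `a ∈ L`; hence `L` is a separable `K`-algebra. -/
theorem nondegenerate_separating_idempotent {K : Type*} [CommRing K]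
    {A : Type*} [Ring A] [Algebra K A] {G : Type*} [Group G] [DecidableEq G] [Fintype G]
    (S : GradedPiAlgebra K A G)
    (hnd : ∃ B : A →ₗ[K] A →ₗ[K] K,
      (∀ x y : A, B x y = LinearMap.trace K A (LinearMap.mulLeft K (x * y))) ∧
      Function.Bijective B ∧ Function.Bijective B.flip)
    (n : G → ℕ) (p q : ∀ α : G, Fin (n α) → A)
    (hp : ∀ (α : G) (i : Fin (n α)), p α i ∈ S.comp α)
    (hq : ∀ (α : G) (i : Fin (n α)), q α i ∈ S.comp α⁻¹)
    (hrepP : ∀ (α : G), ∀ a ∈ S.comp α,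
      a = ∑ i, LinearMap.trace K A (LinearMap.mulLeft K (a * q α i)) • p α i)
    (hrepQ : ∀ (α : G), ∀ b ∈ S.comp α⁻¹,
      b = ∑ i, LinearMap.trace K A (LinearMap.mulLeft K (p α i * b)) • q α i) :
    (∀ (α β : G) (a : A), a ∈ S.comp α →
        ∑ i, (a * p β i) ⊗ₜ[K] q β i =
          ∑ j, p (α * β) j ⊗ₜ[K] (q (α * β) j * a)) ∧
    (LinearMap.mul' K A (∑ α : G, ∑ i, p α i ⊗ₜ[K] q α i) = 1) ∧
    (∀ a : A,
      (a ⊗ₜ[K] (1 : A)) * (∑ α : G, ∑ i, p α i ⊗ₜ[K] q α i) =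
        (∑ α : G, ∑ i, p α i ⊗ₜ[K] q α i) * ((1 : A) ⊗ₜ[K] a)) := by
  classical
  -- the trace functional
  set η : A →ₗ[K] K := (LinearMap.trace K A) ∘ₗ (LinearMap.mul K A) with hηdef
  have hη : ∀ x : A, η x = LinearMap.trace K A (LinearMap.mulLeft K x) := by
    intro x
    rfl
  have hcomm : ∀ x y : A, η (x * y) = η (y * x) := by
    intro x y
    have hxy : LinearMap.mulLeft K (x * y) =
        LinearMap.mulLeft K x * LinearMap.mulLeft K y := by
      ext z; simp [mul_assoc]
    have hyx : LinearMap.mulLeft K (y * x) =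
        LinearMap.mulLeft K y * LinearMap.mulLeft K x := by
      ext z; simp [mul_assoc]
    rw [hη, hη, hxy, hyx, LinearMap.trace_mul_comm]
  -- Part 1
  have part1 : ∀ (α β : G) (a : A), a ∈ S.comp α →
      ∑ i, (a * p β i) ⊗ₜ[K] q β i =
        ∑ j, p (α * β) j ⊗ₜ[K] (q (α * β) j * a) := by
    intro α β a ha
    have hL : ∀ i : Fin (n β), ((a * p β i) ⊗ₜ[K] q β i : A ⊗[K] A)
        = ∑ j, η ((a * p β i) * q (α * β) j) • (p (α * β) j ⊗ₜ[K] q β i) := by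
      intro i
      conv_lhs => rw [hrepP (α * β) (a * p β i) (S.mul_mem ha (hp β i))]
      rw [TensorProduct.sum_tmul]
      exact Finset.sum_congr rfl fun j _ => by rw [TensorProduct.smul_tmul', hη]
    have hR : ∀ j : Fin (n (α * β)), (p (α * β) j ⊗ₜ[K] (q (α * β) j * a) : A ⊗[K] A)
        = ∑ i, η (p β i * (q (α * β) j * a)) • (p (α * β) j ⊗ₜ[K] q β i) := by
      intro j
      have hm : q (α * β) j * a ∈ S.comp β⁻¹ := by
        have h2 := S.mul_mem (hq (α * β) j) ha
        rwa [mul_inv_rev, mul_assoc, inv_mul_cancel, mul_one] at h2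
      conv_lhs => rw [hrepQ β _ hm]
      rw [TensorProduct.tmul_sum]
      exact Finset.sum_congr rfl fun i _ => by rw [TensorProduct.tmul_smul, hη]
    calc ∑ i, (a * p β i) ⊗ₜ[K] q β i
        = ∑ i, ∑ j, η ((a * p β i) * q (α * β) j) • (p (α * β) j ⊗ₜ[K] q β i) :=
          Finset.sum_congr rfl fun i _ => hL i
      _ = ∑ j, ∑ i, η (p β i * (q (α * β) j * a)) • (p (α * β) j ⊗ₜ[K] q β i) := by
          rw [Finset.sum_comm]
          refine Finset.sum_congr rfl fun j _ => Finset.sum_congr rfl fun i _ => ?_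
          congr 1
          rw [hcomm (a * p β i), ← mul_assoc, hcomm (q (α * β) j * a)]
      _ = ∑ j, p (α * β) j ⊗ₜ[K] (q (α * β) j * a) :=
          Finset.sum_congr rfl fun j _ => (hR j).symm
  refine ⟨part1, ?_, ?_⟩
  · -- Part 2 : mul' b = 1
    have hmul' : LinearMap.mul' K A (∑ α : G, ∑ i, p α i ⊗ₜ[K] q α i)
        = ∑ α : G, ∑ i, p α i * q α i := by
      rw [map_sum]
      exact Finset.sum_congr rfl fun α _ => by
        rw [map_sum]
        exact Finset.sum_congr rfl fun i _ => LinearMap.mul'_apply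
    rw [hmul']
    by_cases hfree : ∃ s : Finset A, Nonempty (Module.Basis s K A)
    · obtain ⟨s, ⟨bas⟩⟩ := hfree
      haveI : Module.Free K A := Module.Free.of_basis bas
      haveI : Module.Finite K A := Module.Finite.of_basis bas
      -- projection operators
      set E : DirectSum G (fun α => S.comp α) ≃ₗ[K] A :=
        LinearEquiv.ofBijective (DirectSum.coeLinearMap S.comp) S.internal with hEdef
      set P : G → A →ₗ[K] A := fun δ =>
        (S.comp δ).subtype ∘ₗ (DirectSum.component K G (fun α => S.comp α) δ) ∘ₗ
          E.symm.toLinearMap with hPdef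
      have hPapply : ∀ (δ : G) (x : A), P δ x = ((E.symm x) δ : A) := by
        intro δ x; rfl
      have hPmem : ∀ (δ : G) (x : A), P δ x ∈ S.comp δ := by
        intro δ x; rw [hPapply]; exact ((E.symm x) δ).2
      have hPeq : ∀ (δ : G) (x : A), x ∈ S.comp δ → P δ x = x := by
        intro δ x hx
        rw [hPapply, S.internal.ofBijective_coeLinearMap_of_mem hx]
      have hPsum : ∀ x : A, ∑ δ : G, P δ x = x := by
        intro x
        calc ∑ δ : G, P δ x
            = ∑ δ : G, E (DirectSum.of (fun α => S.comp α) δ ((E.symm x) δ)) := by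
              refine Finset.sum_congr rfl fun δ _ => ?_
              rw [hPapply]
              exact (DirectSum.coeLinearMap_of _ δ _).symm
          _ = E (∑ δ : G, DirectSum.of (fun α => S.comp α) δ ((E.symm x) δ)) :=
              (map_sum E _ _).symm
          _ = E (E.symm x) := by rw [DirectSum.sum_univ_of]
          _ = x := E.apply_symm_apply x
      -- key trace identity
      have hkey : ∀ y ∈ S.comp 1, η y = ∑ α : G, ∑ i, η (y * p α i * q α i) := by
        intro y hy
        have h1 : LinearMap.mulLeft K y = ∑ δ : G, LinearMap.mulLeft K y ∘ₗ P δ := by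
          ext x
          simp only [LinearMap.sum_apply, LinearMap.coe_comp, Function.comp_apply,
            LinearMap.mulLeft_apply]
          rw [← Finset.mul_sum, hPsum]
        have h2 : ∀ δ : G, LinearMap.trace K A (LinearMap.mulLeft K y ∘ₗ P δ)
            = ∑ i, η (y * p δ i * q δ i) := by
          intro δ
          have h3 : LinearMap.mulLeft K y ∘ₗ P δ = ∑ i, dualTensorHom K A A
              ((η ∘ₗ LinearMap.mulRight K (q δ i) ∘ₗ P δ) ⊗ₜ[K] (y * p δ i)) := by
            ext x
            simp only [LinearMap.sum_apply, LinearMap.coe_comp, Function.comp_apply,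
              LinearMap.mulLeft_apply, dualTensorHom_apply, LinearMap.mulRight_apply]
            conv_lhs => rw [hrepP δ (P δ x) (hPmem δ x)]
            rw [Finset.mul_sum]
            refine Finset.sum_congr rfl fun i _ => ?_
            rw [mul_smul_comm, hη]
          rw [h3, map_sum]
          refine Finset.sum_congr rfl fun i _ => ?_
          rw [LinearMap.trace_eq_contract_apply, contractLeft_apply]
          simp only [LinearMap.coe_comp, Function.comp_apply, LinearMap.mulRight_apply]
          have hyp : y * p δ i ∈ S.comp δ := by
            have h4 := S.mul_mem hy (hp δ i)
            rwa [one_mul] at h4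
          rw [hPeq δ _ hyp]
        calc η y = LinearMap.trace K A (LinearMap.mulLeft K y) := hη y
          _ = ∑ δ : G, LinearMap.trace K A (LinearMap.mulLeft K y ∘ₗ P δ) := by
              conv_lhs => rw [h1]
              rw [map_sum]
          _ = ∑ δ : G, ∑ i, η (y * p δ i * q δ i) :=
              Finset.sum_congr rfl fun δ _ => h2 δ
      -- the element e
      set e : A := ∑ α : G, ∑ i, p α i * q α i with hedef
      have hemem : e ∈ S.comp 1 := by
        refine Submodule.sum_mem _ fun α _ => Submodule.sum_mem _ fun i _ => ?_
        have h5 := S.mul_mem (hp α i) (hq α i)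
        rwa [mul_inv_cancel] at h5
      have hq1 : ∀ i : Fin (n 1), q 1 i ∈ S.comp 1 := by
        intro i
        have h6 := hq 1 i
        rwa [inv_one] at h6
      have hcoef : ∀ i : Fin (n 1), η (e * q 1 i) = η (q 1 i) := by
        intro i
        rw [hcomm]
        have h7 : q 1 i * e = ∑ α : G, ∑ j, q 1 i * p α j * q α j := by
          rw [hedef, Finset.mul_sum]
          refine Finset.sum_congr rfl fun α _ => ?_
          rw [Finset.mul_sum]
          exact Finset.sum_congr rfl fun j _ => by rw [mul_assoc]
        rw [h7]
        rw [map_sum]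
        calc ∑ α : G, η (∑ j, q 1 i * p α j * q α j)
            = ∑ α : G, ∑ j, η (q 1 i * p α j * q α j) :=
              Finset.sum_congr rfl fun α _ => map_sum η _ _
          _ = η (q 1 i) := (hkey _ (hq1 i)).symm
      calc e = ∑ i, LinearMap.trace K A (LinearMap.mulLeft K (e * q 1 i)) • p 1 i :=
            hrepP 1 e hemem
        _ = ∑ i, η (q 1 i) • p 1 i := by
            refine Finset.sum_congr rfl fun i _ => ?_
            rw [← hη, hcoef i]
        _ = ∑ i, LinearMap.trace K A (LinearMap.mulLeft K ((1 : A) * q 1 i)) • p 1 i := by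
            refine Finset.sum_congr rfl fun i _ => ?_
            rw [← hη, one_mul]
        _ = 1 := (hrepP 1 1 S.one_mem).symm
    · -- degenerate case: A is a subsingleton
      obtain ⟨B, hB, hBbij, -⟩ := hnd
      have htr : LinearMap.trace K A = 0 := by
        rw [LinearMap.trace]
        exact dif_neg hfree
      haveI : Subsingleton A := by
        refine ⟨fun x y => hBbij.injective ?_⟩
        ext z
        rw [hB, hB, htr]
        rfl
      exact Subsingleton.elim _ _
  · -- Part 3
    intro a
    have hmem : a ∈ ⨆ α, S.comp α := by
      rw [S.internal.submodule_iSup_eq_top]; exact Submodule.mem_top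
    refine Submodule.iSup_induction (motive := fun a : A =>
        (a ⊗ₜ[K] (1 : A)) * (∑ α : G, ∑ i, p α i ⊗ₜ[K] q α i) =
          (∑ α : G, ∑ i, p α i ⊗ₜ[K] q α i) * ((1 : A) ⊗ₜ[K] a))
      S.comp hmem ?_ ?_ ?_
    · intro α x hx
      have hL : (x ⊗ₜ[K] (1 : A)) * (∑ β : G, ∑ i, p β i ⊗ₜ[K] q β i)
          = ∑ β : G, ∑ i, (x * p β i) ⊗ₜ[K] q β i := by
        rw [Finset.mul_sum]
        refine Finset.sum_congr rfl fun β _ => ?_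
        rw [Finset.mul_sum]
        refine Finset.sum_congr rfl fun i _ => ?_
        rw [Algebra.TensorProduct.tmul_mul_tmul, one_mul]
      have hR : (∑ β : G, ∑ i, p β i ⊗ₜ[K] q β i) * ((1 : A) ⊗ₜ[K] x)
          = ∑ β : G, ∑ j, p β j ⊗ₜ[K] (q β j * x) := by
        rw [Finset.sum_mul]
        refine Finset.sum_congr rfl fun β _ => ?_
        rw [Finset.sum_mul]
        refine Finset.sum_congr rfl fun j _ => ?_
        rw [Algebra.TensorProduct.tmul_mul_tmul, mul_one]
      rw [hL, hR]
      calc ∑ β : G, ∑ i, (x * p β i) ⊗ₜ[K] q β i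
          = ∑ β : G, ∑ j, p (α * β) j ⊗ₜ[K] (q (α * β) j * x) :=
            Finset.sum_congr rfl fun β _ => part1 α β x hx
        _ = ∑ β : G, ∑ j, p β j ⊗ₜ[K] (q β j * x) :=
            Fintype.sum_equiv (Equiv.mulLeft α)
              (fun β => ∑ j, p (α * β) j ⊗ₜ[K] (q (α * β) j * x))
              (fun β => ∑ j, p β j ⊗ₜ[K] (q β j * x)) (fun β => rfl)
    · simp [TensorProduct.zero_tmul, TensorProduct.tmul_zero]
    · intro x y hx hy
      rw [TensorProduct.add_tmul, TensorProduct.tmul_add, add_mul, mul_add, hx, hy]
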